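/- Assume P is eventually positive and has SRLP with ratio-limit kernel H, and suppose c, C : G → ℝ satisfy 0 < c(x) ≤ H(x,y) ≤ C(x) for all x, y ∈ G. Let φ : G → ℕ be a bijection and define d : G × G → ℝ by d(y,z) = ∑_{x ∈ G} |H(x,y) − H(x,z)|/(C(x)·2^{φ(x)}). Then for every g ∈ G, left translation y ↦ g·y is uniformly continuous with respect to d: for every ε > 0 there exists δ > 0 such that for all y, z ∈ G, d(y,z) < δ implies d(g·y, g·z) < ε. -/

import Mathlib

open Filter Topology
open scoped Classical

/-- left translation is uniformly continuous with respect to the metric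
defining the ratio-limit space. -/
theorem stmt13 {G : Type*} [Group G] [Countable G]
(μ : G → ℝ) (hμnn : ∀ g : G, 0 ≤ μ g)
    (hμfin : (Function.support μ).Finite)
    (hμgen : Subsemigroup.closure (Function.support μ) = ⊤)
    (hμsum : ∑ᶠ g : G, μ g = 1)
    (ν : ℕ → G → ℝ)
    (hν0 : ∀ x : G, ν 0 x = if x = 1 then 1 else 0)
    (hνs : ∀ (m : ℕ) (x : G), ν (m + 1) x = ∑ᶠ g : G, ν m g * μ (g⁻¹ * x))
(hev : ∀ y : G, ∃ m₀ : ℕ, ∀ m ≥ m₀, 0 < ν m y)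
(H : G → G → ℝ)
    (hH : ∀ x y : G, Tendsto (fun m : ℕ => ν m (x⁻¹ * y) / ν m y) atTop (𝓝 (H x y)))
    (hHpos : ∀ x y : G, 0 < H x y)
    (c C : G → ℝ) (hc : ∀ x : G, 0 < c x)
    (hcH : ∀ x y : G, c x ≤ H x y) (hHC : ∀ x y : G, H x y ≤ C x)
    (φ : G → ℕ) (hφ : Function.Bijective φ) :
    ∀ g : G, ∀ ε > (0 : ℝ), ∃ δ > (0 : ℝ), ∀ y z : G,
      (∑' x : G, |H x y - H x z| / (C x * 2 ^ φ x)) < δ →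
        (∑' x : G, |H x (g * y) - H x (g * z)| / (C x * 2 ^ φ x)) < ε := by
  intro g ε hε
  have hCpos : ∀ x : G, 0 < C x := fun x =>
    lt_of_lt_of_le (hc x) (le_trans (hcH x x) (hHC x x))
  have hpow : ∀ x : G, (0:ℝ) < 2 ^ φ x := fun x => by positivity
  have hden : ∀ x : G, (0:ℝ) < C x * 2 ^ φ x := fun x => mul_pos (hCpos x) (hpow x)
  -- geometric majorant
  have hS : Summable (fun x : G => (1/2:ℝ) ^ φ x) :=
    ((Equiv.ofBijective φ hφ).summable_iff (f := fun n : ℕ => (1/2:ℝ)^n)).mpr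
      summable_geometric_two
  -- termwise bound by the geometric majorant
  have htb : ∀ y z x : G, |H x y - H x z| / (C x * 2 ^ φ x) ≤ (1/2:ℝ) ^ φ x := by
    intro y z x
    have h1 : |H x y - H x z| ≤ C x := by
      rw [abs_sub_le_iff]
      constructor <;> nlinarith [hcH x y, hcH x z, hHC x y, hHC x z, hc x]
    have h2 : C x / (C x * 2 ^ φ x) = (1/2:ℝ) ^ φ x := by
      rw [one_div_pow]
      rw [eq_div_iff (by positivity)]
      field_simp [(hCpos x).ne']
    calc |H x y - H x z| / (C x * 2 ^ φ x) ≤ C x / (C x * 2 ^ φ x) := by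
          gcongr
          exact (hden x).le
      _ = (1/2:ℝ) ^ φ x := h2
  -- summability of the distance terms
  have hsum : ∀ y z : G, Summable (fun x => |H x y - H x z| / (C x * 2 ^ φ x)) :=
    fun y z => Summable.of_nonneg_of_le
      (fun x => div_nonneg (abs_nonneg _) (hden x).le) (htb y z) hS
  -- each term bounded by distance
  have hle : ∀ y z x : G, |H x y - H x z| ≤
      (∑' x : G, |H x y - H x z| / (C x * 2 ^ φ x)) * (C x * 2 ^ φ x) := by
    intro y z x
    have h := Summable.le_tsum (hsum y z) x (fun j _ => div_nonneg (abs_nonneg _) (hden j).le)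
    exact (div_le_iff₀ (hden x)).mp h
  -- the key cocycle identity
  have hkey : ∀ (w x : G), H x (g * w) = H (g⁻¹ * x) w / H g⁻¹ w := by
    intro w x
    obtain ⟨m₀, hm₀⟩ := hev w
    have hd := (hH (g⁻¹ * x) w).div (hH g⁻¹ w) (hHpos g⁻¹ w).ne'
    have heq : (fun m => ν m ((g⁻¹*x)⁻¹*w) / ν m w / (ν m (g⁻¹⁻¹*w) / ν m w))
        =ᶠ[atTop] (fun m => ν m (x⁻¹*(g*w)) / ν m (g*w)) := by
      filter_upwards [eventually_ge_atTop m₀] with m hm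
      have hw : ν m w ≠ 0 := (hm₀ m hm).ne'
      have e1 : (g⁻¹*x)⁻¹*w = x⁻¹*(g*w) := by group
      have e2 : g⁻¹⁻¹*w = g*w := by group
      rw [e1, e2]
      rcases eq_or_ne (ν m (g*w)) 0 with hb|hb
      · simp [hb]
      · field_simp
    exact tendsto_nhds_unique (hH x (g*w)) (hd.congr' heq)
  -- the modulus for each coordinate
  set M : G → ℝ := fun x =>
    (C (g⁻¹*x) * 2 ^ φ (g⁻¹*x) * C g⁻¹ + C (g⁻¹*x) * (C g⁻¹ * 2 ^ φ g⁻¹)) /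
      (c g⁻¹ * c g⁻¹) with hM
  have hMnn : ∀ x : G, 0 ≤ M x := by
    intro x
    apply div_nonneg
    · have h1 := mul_pos (mul_pos (hCpos (g⁻¹*x)) (hpow (g⁻¹*x))) (hCpos g⁻¹)
      have h2 := mul_pos (hCpos (g⁻¹*x)) (mul_pos (hCpos g⁻¹) (hpow g⁻¹))
      linarith
    · have := mul_pos (hc g⁻¹) (hc g⁻¹); linarith
  -- main pointwise estimate
  have hmain : ∀ y z x : G, |H x (g*y) - H x (g*z)| ≤
      (∑' x : G, |H x y - H x z| / (C x * 2 ^ φ x)) * M x := by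
    intro y z x
    set D := ∑' x : G, |H x y - H x z| / (C x * 2 ^ φ x) with hD
    have hD0 : 0 ≤ D := tsum_nonneg (fun x => div_nonneg (abs_nonneg _) (hden x).le)
    rw [hkey y x, hkey z x]
    set A1 := H (g⁻¹*x) y
    set A2 := H (g⁻¹*x) z
    set B1 := H g⁻¹ y
    set B2 := H g⁻¹ z
    have hB1 : 0 < B1 := hHpos _ _
    have hB2 : 0 < B2 := hHpos _ _
    have hA2 : 0 < A2 := hHpos _ _
    have hB1c : c g⁻¹ ≤ B1 := hcH _ _
    have hB2c : c g⁻¹ ≤ B2 := hcH _ _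
    have hA2C : A2 ≤ C (g⁻¹*x) := hHC _ _
    have hB2C : B2 ≤ C g⁻¹ := hHC _ _
    have hrw : A1/B1 - A2/B2 = ((A1 - A2)*B2 + A2*(B2 - B1)) / (B1*B2) := by
      field_simp
      ring
    rw [hrw, abs_div, abs_of_pos (mul_pos hB1 hB2)]
    have hnum : |(A1 - A2)*B2 + A2*(B2 - B1)| ≤
        D * (C (g⁻¹*x) * 2 ^ φ (g⁻¹*x)) * C g⁻¹ +
          C (g⁻¹*x) * (D * (C g⁻¹ * 2 ^ φ g⁻¹)) := by
      calc |(A1 - A2)*B2 + A2*(B2 - B1)|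
          ≤ |A1 - A2| * B2 + A2 * |B2 - B1| := by
            refine (abs_add_le _ _).trans ?_
            rw [abs_mul, abs_mul, abs_of_pos hB2, abs_of_pos hA2]
        _ ≤ (D * (C (g⁻¹*x) * 2 ^ φ (g⁻¹*x))) * C g⁻¹ +
              C (g⁻¹*x) * (D * (C g⁻¹ * 2 ^ φ g⁻¹)) := by
            have h1 : |A1 - A2| ≤ D * (C (g⁻¹*x) * 2 ^ φ (g⁻¹*x)) := hle y z (g⁻¹*x)
            have h2 : |B2 - B1| ≤ D * (C g⁻¹ * 2 ^ φ g⁻¹) := by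
              rw [abs_sub_comm]; exact hle y z g⁻¹
            have hAB : 0 ≤ |A1 - A2| := abs_nonneg _
            nlinarith [abs_nonneg (B2 - B1)]
    calc |(A1 - A2)*B2 + A2*(B2 - B1)| / (B1*B2)
        ≤ (D * (C (g⁻¹*x) * 2 ^ φ (g⁻¹*x)) * C g⁻¹ +
            C (g⁻¹*x) * (D * (C g⁻¹ * 2 ^ φ g⁻¹))) / (c g⁻¹ * c g⁻¹) := by
          exact div_le_div₀ (le_trans (abs_nonneg _) hnum) hnum
            (mul_pos (hc g⁻¹) (hc g⁻¹))
            (mul_le_mul hB1c hB2c (hc g⁻¹).le hB1.le)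
      _ = D * M x := by
          rw [hM]
          field_simp
  -- choose finite set with small tail
  have htail := tendsto_tsum_compl_atTop_zero (fun x : G => (1/2:ℝ) ^ φ x)
  have hev2 : ∀ᶠ s : Finset G in atTop,
      (∑' x : {x // x ∉ s}, (1/2:ℝ) ^ φ (x : G)) < ε/2 :=
    htail.eventually (gt_mem_nhds (by linarith))
  obtain ⟨F, hF⟩ := hev2.exists
  set T : ℝ := ∑ x ∈ F, M x / (C x * 2 ^ φ x) with hT
  have hT0 : 0 ≤ T :=
    Finset.sum_nonneg (fun x _ => div_nonneg (hMnn x) (hden x).le)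
  refine ⟨ε / (2 * (T + 1)), by positivity, ?_⟩
  intro y z hyz
  set D := ∑' x : G, |H x y - H x z| / (C x * 2 ^ φ x) with hD
  have hD0 : 0 ≤ D := tsum_nonneg (fun x => div_nonneg (abs_nonneg _) (hden x).le)
  -- split the sum
  have hsplit := Summable.sum_add_tsum_compl (s := F) (hsum (g*y) (g*z))
  rw [← hsplit]
  have hhead : (∑ x ∈ F, |H x (g*y) - H x (g*z)| / (C x * 2 ^ φ x)) ≤ D * T := by
    rw [hT, Finset.mul_sum]
    apply Finset.sum_le_sum
    intro x _
    rw [← mul_div_assoc]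
    exact div_le_div₀ (mul_nonneg hD0 (hMnn x)) (hmain y z x) (hden x) le_rfl
  have htail2 : (∑' x : ↑((F : Set G)ᶜ), |H (x:G) (g*y) - H (x:G) (g*z)| / (C (x:G) * 2 ^ φ (x:G))) < ε/2 := by
    refine lt_of_le_of_lt ?_ hF
    exact Summable.tsum_le_tsum (fun i => htb (g*y) (g*z) i)
      ((hsum (g*y) (g*z)).subtype _) (hS.subtype _)
  have hDT : D * T < ε/2 := by
    have h1 : D * T ≤ (ε / (2 * (T + 1))) * T := by
      apply mul_le_mul_of_nonneg_right (le_of_lt hyz) hT0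
    have h2 : (ε / (2 * (T + 1))) * T < ε/2 := by
      rw [div_mul_eq_mul_div, div_lt_iff₀ (by positivity)]
      nlinarith
    linarith
  linarith [hhead, htail2, hDT]
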